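/- In the randomize-first-sample-second design, the covariance of the two arm sample means is Cov[ȳ(1), ȳ(0)] = -S_{10}/N = -(S_1² + S_0² - S_τ²)/(2N). -/

import Mathlib

open Finset

/-- Expectation under the uniform distribution on a finite sample space. -/
noncomputable def Ex {α : Type*} (Ω : Finset α) (f : α → ℝ) : ℝ :=
  (∑ ω ∈ Ω, f ω) / (Ω.card : ℝ)

/-- The randomize-first-sample-second design: outcomes are triples `(A, B, C)`
where `A` is the treatment-1 group of size `N₁` (its complement is group 0),
`B ⊆ A` is the size-`n₁` sample from group 1, and `C ⊆ Aᶜ` is the size-`n₀`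
sample from group 0, all chosen uniformly at random. -/
def design2 (N N1 n1 n0 : ℕ) :
    Finset (Finset (Fin N) × Finset (Fin N) × Finset (Fin N)) :=
  Finset.univ.filter (fun p =>
    p.1.card = N1 ∧ p.2.1 ⊆ p.1 ∧ p.2.1.card = n1 ∧
    p.2.2 ⊆ p.1ᶜ ∧ p.2.2.card = n0)

/-- Indicator that unit `i` is sampled from treatment group 1. -/
def S1 {N : ℕ} (i : Fin N)
    (p : Finset (Fin N) × Finset (Fin N) × Finset (Fin N)) : ℝ :=
  if i ∈ p.2.1 then 1 else 0

/-- Indicator that unit `i` is sampled from treatment group 0. -/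
def S0 {N : ℕ} (i : Fin N)
    (p : Finset (Fin N) × Finset (Fin N) × Finset (Fin N)) : ℝ :=
  if i ∈ p.2.2 then 1 else 0

section Helpers

variable {N N1 n1 n0 : ℕ}

private lemma mem_design2' {p : Finset (Fin N) × Finset (Fin N) × Finset (Fin N)} :
    p ∈ design2 N N1 n1 n0 ↔
      p.1.card = N1 ∧ p.2.1 ⊆ p.1 ∧ p.2.1.card = n1 ∧ p.2.2 ⊆ p.1ᶜ ∧ p.2.2.card = n0 := by
  simp [design2]

private def actP {N : ℕ} (σ : Equiv.Perm (Fin N))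
    (p : Finset (Fin N) × Finset (Fin N) × Finset (Fin N)) :
    Finset (Fin N) × Finset (Fin N) × Finset (Fin N) :=
  (p.1.map σ.toEmbedding, p.2.1.map σ.toEmbedding, p.2.2.map σ.toEmbedding)

private lemma compl_map' {N : ℕ} (σ : Equiv.Perm (Fin N)) (A : Finset (Fin N)) :
    (A.map σ.toEmbedding)ᶜ = Aᶜ.map σ.toEmbedding := by
  ext x; simp [Finset.mem_map_equiv]

private lemma actP_mem (σ : Equiv.Perm (Fin N))
    {p : Finset (Fin N) × Finset (Fin N) × Finset (Fin N)}
    (hp : p ∈ design2 N N1 n1 n0) : actP σ p ∈ design2 N N1 n1 n0 := by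
  rw [mem_design2'] at hp ⊢
  obtain ⟨h1, h2, h3, h4, h5⟩ := hp
  exact ⟨by simp [actP, h1], by simpa [actP, Finset.map_subset_map] using h2,
    by simp [actP, h3], by simpa [actP, compl_map', Finset.map_subset_map] using h4,
    by simp [actP, h5]⟩

private lemma actP_actP {N : ℕ} (σ : Equiv.Perm (Fin N)) (p) :
    actP σ.symm (actP σ p) = p := by
  have h : ∀ s : Finset (Fin N), (s.map σ.toEmbedding).map σ.symm.toEmbedding = s := by
    intro s; ext x; simp [Finset.mem_map_equiv]
  simp [actP, h]

private lemma count_B_eq (i k : Fin N) :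
    ((design2 N N1 n1 n0).filter fun p => i ∈ p.2.1).card
      = ((design2 N N1 n1 n0).filter fun p => k ∈ p.2.1).card := by
  apply Finset.card_nbij' (actP (Equiv.swap i k)) (actP (Equiv.swap i k))
  · intro p hp
    rw [Finset.mem_coe, Finset.mem_filter] at hp ⊢
    refine ⟨actP_mem _ hp.1, ?_⟩
    simpa [actP, Finset.mem_map_equiv] using hp.2
  · intro p hp
    rw [Finset.mem_coe, Finset.mem_filter] at hp ⊢
    refine ⟨actP_mem _ hp.1, ?_⟩
    simpa [actP, Finset.mem_map_equiv] using hp.2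
  · intro p _
    have := actP_actP (Equiv.swap i k) p
    rwa [Equiv.symm_swap] at this
  · intro p _
    have := actP_actP (Equiv.swap i k) p
    rwa [Equiv.symm_swap] at this

private lemma count_C_eq (i k : Fin N) :
    ((design2 N N1 n1 n0).filter fun p => i ∈ p.2.2).card
      = ((design2 N N1 n1 n0).filter fun p => k ∈ p.2.2).card := by
  apply Finset.card_nbij' (actP (Equiv.swap i k)) (actP (Equiv.swap i k))
  · intro p hp
    rw [Finset.mem_coe, Finset.mem_filter] at hp ⊢
    refine ⟨actP_mem _ hp.1, ?_⟩
    simpa [actP, Finset.mem_map_equiv] using hp.2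
  · intro p hp
    rw [Finset.mem_coe, Finset.mem_filter] at hp ⊢
    refine ⟨actP_mem _ hp.1, ?_⟩
    simpa [actP, Finset.mem_map_equiv] using hp.2
  · intro p _
    have := actP_actP (Equiv.swap i k) p
    rwa [Equiv.symm_swap] at this
  · intro p _
    have := actP_actP (Equiv.swap i k) p
    rwa [Equiv.symm_swap] at this

private lemma exists_perm_pair {N : ℕ} {i j k l : Fin N} (hij : i ≠ j) (hkl : k ≠ l) :
    ∃ σ : Equiv.Perm (Fin N), σ i = k ∧ σ j = l := by
  refine ⟨(Equiv.swap i k).trans (Equiv.swap (Equiv.swap i k j) l), ?_, ?_⟩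
  · simp only [Equiv.trans_apply, Equiv.swap_apply_left]
    apply Equiv.swap_apply_of_ne_of_ne
    · intro h
      exact hij ((Equiv.swap i k).injective (by rw [Equiv.swap_apply_left, ← h]))
    · exact hkl
  · simp only [Equiv.trans_apply, Equiv.swap_apply_left]

private lemma actP_mem_B {N : ℕ} (σ : Equiv.Perm (Fin N)) {i : Fin N}
    {s : Finset (Fin N)} : σ i ∈ s.map σ.toEmbedding ↔ i ∈ s := by
  simp [Finset.mem_map_equiv]

private lemma count_pair_eq {i j k l : Fin N} (hij : i ≠ j) (hkl : k ≠ l) :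
    ((design2 N N1 n1 n0).filter fun p => i ∈ p.2.1 ∧ j ∈ p.2.2).card
      = ((design2 N N1 n1 n0).filter fun p => k ∈ p.2.1 ∧ l ∈ p.2.2).card := by
  obtain ⟨σ, hik, hjl⟩ := exists_perm_pair hij hkl
  apply Finset.card_nbij' (actP σ) (actP σ.symm)
  · intro p hp
    rw [Finset.mem_coe, Finset.mem_filter] at hp ⊢
    exact ⟨actP_mem _ hp.1, by rw [← hik]; exact actP_mem_B σ |>.2 hp.2.1,
      by rw [← hjl]; exact actP_mem_B σ |>.2 hp.2.2⟩
  · intro p hp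
    rw [Finset.mem_coe, Finset.mem_filter] at hp ⊢
    refine ⟨actP_mem _ hp.1, ?_, ?_⟩
    · have h' : i = σ.symm k := by rw [← hik, Equiv.symm_apply_apply]
      rw [h']; exact actP_mem_B σ.symm |>.2 hp.2.1
    · have h' : j = σ.symm l := by rw [← hjl, Equiv.symm_apply_apply]
      rw [h']; exact actP_mem_B σ.symm |>.2 hp.2.2
  · intro p _; exact actP_actP σ p
  · intro p _
    have := actP_actP σ.symm p
    rwa [Equiv.symm_symm] at this

private lemma count_diag_zero (i : Fin N) :
    ((design2 N N1 n1 n0).filter fun p => i ∈ p.2.1 ∧ i ∈ p.2.2).card = 0 := by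
  rw [Finset.card_eq_zero, Finset.filter_eq_empty_iff]
  rintro p hp ⟨h1, h2⟩
  rw [mem_design2'] at hp
  exact (Finset.mem_compl.1 (hp.2.2.2.1 h2)) (hp.2.1 h1)

private lemma design2_nonempty (hN1 : N1 ≤ N) (hn1' : n1 ≤ N1) (hn0' : n0 ≤ N - N1) :
    (design2 N N1 n1 n0).Nonempty := by
  obtain ⟨A, -, hA⟩ := Finset.exists_subset_card_eq
    (s := (Finset.univ : Finset (Fin N))) (n := N1) (by simpa using hN1)
  obtain ⟨B, hBA, hB⟩ := Finset.exists_subset_card_eq (s := A) (n := n1) (hA ▸ hn1')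
  obtain ⟨C, hCA, hC⟩ := Finset.exists_subset_card_eq (s := Aᶜ) (n := n0)
    (by rw [Finset.card_compl, hA]; simpa using hn0')
  exact ⟨(A, B, C), mem_design2'.2 ⟨hA, hBA, hB, hCA, hC⟩⟩

private lemma sum_ind {N : ℕ} (B : Finset (Fin N)) :
    (∑ i : Fin N, if i ∈ B then (1:ℕ) else 0) = B.card := by
  simp [Finset.sum_ite_mem]

private lemma count_B_total :
    (∑ i : Fin N, ((design2 N N1 n1 n0).filter fun p => i ∈ p.2.1).card)
      = (design2 N N1 n1 n0).card * n1 := by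
  simp_rw [Finset.card_filter]
  rw [Finset.sum_comm]
  have h : ∀ p ∈ design2 N N1 n1 n0,
      (∑ i : Fin N, if i ∈ p.2.1 then (1:ℕ) else 0) = n1 := fun p hp => by
    rw [sum_ind, (mem_design2'.1 hp).2.2.1]
  rw [Finset.sum_congr rfl h, Finset.sum_const, smul_eq_mul]

private lemma count_C_total :
    (∑ i : Fin N, ((design2 N N1 n1 n0).filter fun p => i ∈ p.2.2).card)
      = (design2 N N1 n1 n0).card * n0 := by
  simp_rw [Finset.card_filter]
  rw [Finset.sum_comm]
  have h : ∀ p ∈ design2 N N1 n1 n0,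
      (∑ i : Fin N, if i ∈ p.2.2 then (1:ℕ) else 0) = n0 := fun p hp => by
    rw [sum_ind, (mem_design2'.1 hp).2.2.2.2]
  rw [Finset.sum_congr rfl h, Finset.sum_const, smul_eq_mul]

private lemma count_pair_total :
    (∑ i : Fin N, ∑ j : Fin N,
        ((design2 N N1 n1 n0).filter fun p => i ∈ p.2.1 ∧ j ∈ p.2.2).card)
      = (design2 N N1 n1 n0).card * (n1 * n0) := by
  simp_rw [Finset.card_filter]
  have h1 : ∀ i : Fin N, (∑ j : Fin N, ∑ p ∈ design2 N N1 n1 n0,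
      if i ∈ p.2.1 ∧ j ∈ p.2.2 then (1:ℕ) else 0)
      = ∑ p ∈ design2 N N1 n1 n0, ∑ j : Fin N,
        if i ∈ p.2.1 ∧ j ∈ p.2.2 then (1:ℕ) else 0 := fun i => Finset.sum_comm
  simp_rw [h1]
  rw [Finset.sum_comm]
  have h2 : ∀ p ∈ design2 N N1 n1 n0,
      (∑ i : Fin N, ∑ j : Fin N, if i ∈ p.2.1 ∧ j ∈ p.2.2 then (1:ℕ) else 0)
        = n1 * n0 := by
    intro p hp
    have hsplit : ∀ i j : Fin N, (if i ∈ p.2.1 ∧ j ∈ p.2.2 then (1:ℕ) else 0)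
        = (if i ∈ p.2.1 then 1 else 0) * (if j ∈ p.2.2 then 1 else 0) := by
      intro i j
      by_cases h1 : i ∈ p.2.1 <;> by_cases h2 : j ∈ p.2.2 <;> simp [h1, h2]
    simp_rw [hsplit, ← Finset.mul_sum, ← Finset.sum_mul, sum_ind]
    rw [(mem_design2'.1 hp).2.2.1, (mem_design2'.1 hp).2.2.2.2]
  rw [Finset.sum_congr rfl h2, Finset.sum_const, smul_eq_mul]

end Helpers

/-- Cov[ȳ(1), ȳ(0)] = -S₁₀/N = -(S₁² + S₀² - S_τ²)/(2N). -/
theorem design2_arm_means_covariance (N N1 n1 n0 : ℕ) (hN : 2 ≤ N)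
    (hN1 : N1 ≤ N) (hn1 : 1 ≤ n1) (hn1' : n1 ≤ N1)
    (hn0 : 1 ≤ n0) (hn0' : n0 ≤ N - N1)
    (Y1 Y0 : Fin N → ℝ) (Ybar1 Ybar0 S1sq S0sq S10 Stausq : ℝ)
    (hY1 : Ybar1 = (∑ i, Y1 i) / (N : ℝ))
    (hY0 : Ybar0 = (∑ i, Y0 i) / (N : ℝ))
    (hS1 : S1sq = (∑ i, (Y1 i - Ybar1) ^ 2) / ((N : ℝ) - 1))
    (hS0 : S0sq = (∑ i, (Y0 i - Ybar0) ^ 2) / ((N : ℝ) - 1))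
    (hS10 : S10 = (∑ i, (Y1 i - Ybar1) * (Y0 i - Ybar0)) / ((N : ℝ) - 1))
    (hStau : Stausq =
      (∑ i, ((Y1 i - Y0 i) - (Ybar1 - Ybar0)) ^ 2) / ((N : ℝ) - 1)) :
    Ex (design2 N N1 n1 n0)
        (fun p => ((∑ i ∈ p.2.1, Y1 i) / (n1 : ℝ))
          * ((∑ i ∈ p.2.2, Y0 i) / (n0 : ℝ)))
      - Ex (design2 N N1 n1 n0) (fun p => (∑ i ∈ p.2.1, Y1 i) / (n1 : ℝ))
        * Ex (design2 N N1 n1 n0) (fun p => (∑ i ∈ p.2.2, Y0 i) / (n0 : ℝ))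
      = -S10 / (N : ℝ) ∧
    -S10 / (N : ℝ) = -(S1sq + S0sq - Stausq) / (2 * (N : ℝ)) := by
  -- basic nonvanishing facts
  have hN2R : (2:ℝ) ≤ (N:ℝ) := by exact_mod_cast hN
  have hN0 : (N:ℝ) ≠ 0 := by linarith
  have hNm1 : (N:ℝ) - 1 ≠ 0 := by intro h; linarith
  have hn1R : (n1:ℝ) ≠ 0 := by
    have : (1:ℝ) ≤ (n1:ℝ) := by exact_mod_cast hn1
    linarith
  have hn0R : (n0:ℝ) ≠ 0 := by
    have : (1:ℝ) ≤ (n0:ℝ) := by exact_mod_cast hn0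
    linarith
  have hΩne : (design2 N N1 n1 n0).Nonempty := design2_nonempty hN1 hn1' hn0'
  have hMpos : (0:ℝ) < ((design2 N N1 n1 n0).card : ℝ) := by
    exact_mod_cast Finset.card_pos.2 hΩne
  have hM0 : ((design2 N N1 n1 n0).card : ℝ) ≠ 0 := ne_of_gt hMpos
  -- distinguished indices
  set i0 : Fin N := ⟨0, by omega⟩ with hi0
  set i1 : Fin N := ⟨1, by omega⟩ with hi1
  have hne : i0 ≠ i1 := by
    intro h
    simpa [hi0, hi1, Fin.ext_iff] using h
  -- the common counts
  set c1 : ℕ := ((design2 N N1 n1 n0).filter fun p => i0 ∈ p.2.1).card with hc1def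
  set c0 : ℕ := ((design2 N N1 n1 n0).filter fun p => i0 ∈ p.2.2).card with hc0def
  set c2 : ℕ := ((design2 N N1 n1 n0).filter fun p => i0 ∈ p.2.1 ∧ i1 ∈ p.2.2).card
    with hc2def
  have hc1 : ∀ i : Fin N, ((design2 N N1 n1 n0).filter fun p => i ∈ p.2.1).card = c1 :=
    fun i => count_B_eq i i0
  have hc0 : ∀ i : Fin N, ((design2 N N1 n1 n0).filter fun p => i ∈ p.2.2).card = c0 :=
    fun i => count_C_eq i i0
  have hc2 : ∀ i j : Fin N, i ≠ j →
      ((design2 N N1 n1 n0).filter fun p => i ∈ p.2.1 ∧ j ∈ p.2.2).card = c2 :=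
    fun i j h => count_pair_eq h hne
  have hcij : ∀ i j : Fin N,
      ((design2 N N1 n1 n0).filter fun p => i ∈ p.2.1 ∧ j ∈ p.2.2).card
        = if i = j then 0 else c2 := by
    intro i j
    by_cases h : i = j
    · subst h; rw [if_pos rfl]; exact count_diag_zero i
    · rw [if_neg h, hc2 i j h]
  -- the counting identities, in ℝ
  have hA1 : (N:ℝ) * c1 = ((design2 N N1 n1 n0).card : ℝ) * n1 := by
    have h := count_B_total (N := N) (N1 := N1) (n1 := n1) (n0 := n0)
    simp_rw [hc1] at h
    rw [Finset.sum_const, Finset.card_univ, Fintype.card_fin, smul_eq_mul] at h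
    exact_mod_cast h
  have hA0 : (N:ℝ) * c0 = ((design2 N N1 n1 n0).card : ℝ) * n0 := by
    have h := count_C_total (N := N) (N1 := N1) (n1 := n1) (n0 := n0)
    simp_rw [hc0] at h
    rw [Finset.sum_const, Finset.card_univ, Fintype.card_fin, smul_eq_mul] at h
    exact_mod_cast h
  have hA2 : (N:ℝ) * (((N:ℝ) - 1) * c2)
      = ((design2 N N1 n1 n0).card : ℝ) * (n1 * n0) := by
    have h := count_pair_total (N := N) (N1 := N1) (n1 := n1) (n0 := n0)
    simp_rw [hcij] at h
    have hrow : ∀ i : Fin N, (∑ j : Fin N, if i = j then 0 else c2) = (N - 1) * c2 := by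
      intro i
      rw [← Finset.add_sum_erase _ _ (Finset.mem_univ i), if_pos rfl, zero_add]
      have h' : ∀ j ∈ Finset.univ.erase i, (if i = j then 0 else c2) = c2 :=
        fun j hj => if_neg (Ne.symm (Finset.ne_of_mem_erase hj))
      rw [Finset.sum_congr rfl h', Finset.sum_const, smul_eq_mul,
        Finset.card_erase_of_mem (Finset.mem_univ i), Finset.card_univ, Fintype.card_fin]
    rw [Finset.sum_congr rfl (fun i _ => hrow i), Finset.sum_const, Finset.card_univ,
      Fintype.card_fin, smul_eq_mul] at h
    have hcast : ((N - 1 : ℕ) : ℝ) = (N:ℝ) - 1 := by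
      have h1 : 1 ≤ N := by omega
      push_cast [h1]
      ring
    rw [← hcast]
    exact_mod_cast h
  -- explicit values of the counts
  have hc1v : (c1:ℝ) = ((design2 N N1 n1 n0).card : ℝ) * n1 / N := by
    rw [eq_div_iff hN0]; linear_combination hA1
  have hc0v : (c0:ℝ) = ((design2 N N1 n1 n0).card : ℝ) * n0 / N := by
    rw [eq_div_iff hN0]; linear_combination hA0
  have hc2v : (c2:ℝ) = ((design2 N N1 n1 n0).card : ℝ) * (n1 * n0) / ((N:ℝ) * ((N:ℝ) - 1)) := by
    rw [eq_div_iff (mul_ne_zero hN0 hNm1)]; linear_combination hA2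
  -- sum identities
  have hext1 : ∀ p ∈ design2 N N1 n1 n0,
      (∑ i ∈ p.2.1, Y1 i) = ∑ i : Fin N, if i ∈ p.2.1 then Y1 i else 0 := by
    intro p _; rw [Finset.sum_ite_mem, Finset.univ_inter]
  have hext0 : ∀ p ∈ design2 N N1 n1 n0,
      (∑ i ∈ p.2.2, Y0 i) = ∑ i : Fin N, if i ∈ p.2.2 then Y0 i else 0 := by
    intro p _; rw [Finset.sum_ite_mem, Finset.univ_inter]
  have hs1 : ∑ p ∈ design2 N N1 n1 n0, (∑ i ∈ p.2.1, Y1 i)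
      = (c1:ℝ) * ∑ i, Y1 i := by
    rw [Finset.sum_congr rfl hext1, Finset.sum_comm]
    have e2 : ∀ i : Fin N,
        (∑ p ∈ design2 N N1 n1 n0, if i ∈ p.2.1 then Y1 i else 0) = (c1:ℝ) * Y1 i := by
      intro i
      rw [← Finset.sum_filter, Finset.sum_const, hc1 i, nsmul_eq_mul]
    rw [Finset.sum_congr rfl (fun i _ => e2 i), ← Finset.mul_sum]
  have hs0 : ∑ p ∈ design2 N N1 n1 n0, (∑ i ∈ p.2.2, Y0 i)
      = (c0:ℝ) * ∑ i, Y0 i := by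
    rw [Finset.sum_congr rfl hext0, Finset.sum_comm]
    have e2 : ∀ i : Fin N,
        (∑ p ∈ design2 N N1 n1 n0, if i ∈ p.2.2 then Y0 i else 0) = (c0:ℝ) * Y0 i := by
      intro i
      rw [← Finset.sum_filter, Finset.sum_const, hc0 i, nsmul_eq_mul]
    rw [Finset.sum_congr rfl (fun i _ => e2 i), ← Finset.mul_sum]
  have hsp : ∑ p ∈ design2 N N1 n1 n0, (∑ i ∈ p.2.1, Y1 i) * (∑ j ∈ p.2.2, Y0 j)
      = (c2:ℝ) * ((∑ i, Y1 i) * (∑ i, Y0 i) - ∑ i, Y1 i * Y0 i) := by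
    have e1 : ∀ p ∈ design2 N N1 n1 n0,
        (∑ i ∈ p.2.1, Y1 i) * (∑ j ∈ p.2.2, Y0 j)
          = ∑ i : Fin N, ∑ j : Fin N,
              (if i ∈ p.2.1 ∧ j ∈ p.2.2 then Y1 i * Y0 j else 0) := by
      intro p hp
      rw [hext1 p hp, hext0 p hp, Finset.sum_mul_sum]
      refine Finset.sum_congr rfl fun i _ => Finset.sum_congr rfl fun j _ => ?_
      by_cases h1 : i ∈ p.2.1 <;> by_cases h2 : j ∈ p.2.2 <;> simp [h1, h2]
    rw [Finset.sum_congr rfl e1, Finset.sum_comm]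
    have e2 : ∀ i : Fin N, (∑ p ∈ design2 N N1 n1 n0, ∑ j : Fin N,
        if i ∈ p.2.1 ∧ j ∈ p.2.2 then Y1 i * Y0 j else 0)
        = ∑ j : Fin N, ∑ p ∈ design2 N N1 n1 n0,
          if i ∈ p.2.1 ∧ j ∈ p.2.2 then Y1 i * Y0 j else 0 := fun i => Finset.sum_comm
    rw [Finset.sum_congr rfl (fun i _ => e2 i)]
    have e3 : ∀ i j : Fin N,
        (∑ p ∈ design2 N N1 n1 n0, if i ∈ p.2.1 ∧ j ∈ p.2.2 then Y1 i * Y0 j else 0)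
          = (c2:ℝ) * (Y1 i * Y0 j) - (if i = j then (c2:ℝ) * (Y1 i * Y0 j) else 0) := by
      intro i j
      rw [← Finset.sum_filter, Finset.sum_const, hcij i j]
      by_cases h : i = j
      · rw [if_pos h, if_pos h]; simp
      · rw [if_neg h, if_neg h, nsmul_eq_mul]; ring
    rw [Finset.sum_congr rfl (fun i _ =>
      Finset.sum_congr rfl (fun j _ => e3 i j))]
    simp_rw [Finset.sum_sub_distrib, Finset.sum_ite_eq, Finset.mem_univ, if_true,
      ← Finset.mul_sum]
    rw [← Finset.sum_mul]
    ring
  -- expansion of the cross-moment sum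
  have hkey : (∑ i, (Y1 i - Ybar1) * (Y0 i - Ybar0))
      = (∑ i, Y1 i * Y0 i) - Ybar0 * (∑ i, Y1 i) - Ybar1 * (∑ i, Y0 i)
        + (N:ℝ) * (Ybar1 * Ybar0) := by
    have e : ∀ i : Fin N, (Y1 i - Ybar1) * (Y0 i - Ybar0)
        = Y1 i * Y0 i - Ybar0 * Y1 i - Ybar1 * Y0 i + Ybar1 * Ybar0 := fun i => by ring
    rw [Finset.sum_congr rfl (fun i _ => e i)]
    simp_rw [Finset.sum_add_distrib, Finset.sum_sub_distrib, ← Finset.mul_sum,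
      Finset.sum_const, Finset.card_univ, Fintype.card_fin, nsmul_eq_mul]
    ring
  -- second conjunct
  have hstau2 : Stausq = S1sq + S0sq - 2 * S10 := by
    rw [hStau, hS1, hS0, hS10]
    have e : ∀ i : Fin N, ((Y1 i - Y0 i) - (Ybar1 - Ybar0)) ^ 2
        = (Y1 i - Ybar1) ^ 2 + (Y0 i - Ybar0) ^ 2
          - 2 * ((Y1 i - Ybar1) * (Y0 i - Ybar0)) := fun i => by ring
    rw [Finset.sum_congr rfl (fun i _ => e i)]
    simp_rw [Finset.sum_sub_distrib, Finset.sum_add_distrib, ← Finset.mul_sum]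
    ring
  constructor
  · -- main covariance computation
    simp only [Ex]
    have hrw1 : (∑ p ∈ design2 N N1 n1 n0,
        ((∑ i ∈ p.2.1, Y1 i) / (n1:ℝ)) * ((∑ i ∈ p.2.2, Y0 i) / (n0:ℝ)))
        = ((c2:ℝ) * ((∑ i, Y1 i) * (∑ i, Y0 i) - ∑ i, Y1 i * Y0 i)) / ((n1:ℝ) * n0) := by
      rw [← hsp, Finset.sum_div]
      exact Finset.sum_congr rfl fun p _ => by rw [div_mul_div_comm]
    have hrw2 : (∑ p ∈ design2 N N1 n1 n0, (∑ i ∈ p.2.1, Y1 i) / (n1:ℝ))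
        = ((c1:ℝ) * ∑ i, Y1 i) / (n1:ℝ) := by
      rw [← hs1, Finset.sum_div]
    have hrw3 : (∑ p ∈ design2 N N1 n1 n0, (∑ i ∈ p.2.2, Y0 i) / (n0:ℝ))
        = ((c0:ℝ) * ∑ i, Y0 i) / (n0:ℝ) := by
      rw [← hs0, Finset.sum_div]
    rw [hrw1, hrw2, hrw3, hS10, hkey, hY1, hY0, hc1v, hc0v, hc2v]
    field_simp
    ring
  · rw [hstau2]
    field_simp
    ring
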